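/- Let K be a natural number and a_0, a_1, …, a_K real numbers. Then ∫_{-1}^{1} ( Σ_{k=0}^{K} a_k Φ_k'(x) )^2 (1-x) dx = 2 Σ_{k=0}^{K} (k+1) a_k^2, where Φ_k(x) = L_{k+1}(x) + L_k(x) and Φ_k' denotes its derivative. -/

import Mathlib

open Polynomial

/-- The `n`-th Legendre polynomial, via the Rodrigues formula. -/
noncomputable def legendre (n : ℕ) : Polynomial ℝ :=
  ((1 : ℝ) / (2 ^ n * n.factorial)) • (⇑derivative)^[n] ((X ^ 2 - 1) ^ n)

/-- `Φ_k = L_{k+1} + L_k`. -/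
noncomputable def Phi (k : ℕ) : Polynomial ℝ := legendre (k + 1) + legendre k

noncomputable def Pint (p : Polynomial ℝ) : ℝ := ∫ x in (-1:ℝ)..1, p.eval x

lemma Pint_add (p q : Polynomial ℝ) : Pint (p + q) = Pint p + Pint q := by
  unfold Pint
  simp only [eval_add]
  exact intervalIntegral.integral_add ((p.continuous_aeval).intervalIntegrable _ _)
    ((q.continuous_aeval).intervalIntegrable _ _)

lemma Pint_smul (c : ℝ) (p : Polynomial ℝ) : Pint (c • p) = c * Pint p := by
  unfold Pint
  simp only [eval_smul, smul_eq_mul]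
  exact intervalIntegral.integral_const_mul c _

lemma Pint_zero : Pint 0 = 0 := by unfold Pint; simp

lemma Pint_neg (p : Polynomial ℝ) : Pint (-p) = - Pint p := by
  have := Pint_smul (-1) p; simpa using this

lemma Pint_sub (p q : Polynomial ℝ) : Pint (p - q) = Pint p - Pint q := by
  rw [sub_eq_add_neg, Pint_add, Pint_neg]; ring

lemma Pint_deriv (p : Polynomial ℝ) : Pint (derivative p) = p.eval 1 - p.eval (-1) := by
  unfold Pint
  exact intervalIntegral.integral_eq_sub_of_hasDerivAt (fun x _ => p.hasDerivAt x)
    (((derivative p).continuous_aeval).intervalIntegrable _ _)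

lemma Pint_parts (p q : Polynomial ℝ) :
    Pint (derivative p * q) =
      (p * q).eval 1 - (p * q).eval (-1) - Pint (p * derivative q) := by
  have h := Pint_deriv (p * q)
  rw [derivative_mul, Pint_add] at h
  linarith

lemma deriv_sq_sub_one : derivative (X ^ 2 - 1 : Polynomial ℝ) = C 2 * X := by
  rw [derivative_sub, derivative_one, derivative_X_pow]
  norm_num

/-- Structure of iterated derivatives of `(X²-1)^n`. -/
lemma rodrigues_struct (n : ℕ) : ∀ m, m ≤ n →
    ∃ r : Polynomial ℝ, (⇑derivative)^[m] ((X ^ 2 - 1) ^ n) = (X ^ 2 - 1) ^ (n - m) * r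
      ∧ r.eval (-1) = (-2) ^ m * (n.descFactorial m : ℝ) := by
  intro m
  induction m with
  | zero => intro _; exact ⟨1, by simp, by simp⟩
  | succ m ih =>
    intro hm
    obtain ⟨r, h1, h2⟩ := ih (Nat.le_of_succ_le hm)
    have hnm : n - m = (n - (m+1)) + 1 := by omega
    refine ⟨C ((n - m : ℕ) : ℝ) * (C 2 * X) * r + (X ^ 2 - 1) * derivative r, ?_, ?_⟩
    · rw [Function.iterate_succ_apply', h1, derivative_mul, derivative_pow, deriv_sq_sub_one]
      have e1 : n - m - 1 = n - (m+1) := by omega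
      rw [e1, hnm, pow_succ]
      ring
    · have hx : ((X:Polynomial ℝ) ^ 2 - 1).eval (-1) = 0 := by norm_num
      simp only [eval_add, eval_mul, eval_C, hx, eval_X, zero_mul, add_zero, h2,
        eval_ofNat]
      rw [Nat.descFactorial_succ]
      have : ((n - m : ℕ) : ℝ) = (n : ℝ) - m := by
        have := Nat.le_of_succ_le hm; push_cast [this]; ring
      push_cast [this]
      ring
lemma rodrigues_boundary (n m : ℕ) (hm : m < n) (x : ℝ) (hx : x ^ 2 - 1 = 0) :
    (((⇑derivative)^[m] ((X ^ 2 - 1 : Polynomial ℝ) ^ n))).eval x = 0 := by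
  obtain ⟨r, h1, -⟩ := rodrigues_struct n m hm.le
  rw [h1, eval_mul, eval_pow]
  have : ((X:Polynomial ℝ) ^ 2 - 1).eval x = 0 := by simpa using hx
  rw [this, zero_pow (by omega), zero_mul]

/-- Shift derivatives onto `q` by repeated integration by parts. -/
lemma rodrigues_shift (n : ℕ) (q : Polynomial ℝ) : ∀ j, j ≤ n →
    Pint ((⇑derivative)^[n] ((X ^ 2 - 1) ^ n) * q)
      = (-1) ^ j * Pint ((⇑derivative)^[n - j] ((X ^ 2 - 1) ^ n) * (⇑derivative)^[j] q) := by
  intro j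
  induction j with
  | zero => intro _; simp
  | succ j ih =>
    intro hj
    rw [ih (Nat.le_of_succ_le hj)]
    have e1 : n - j = (n - (j+1)) + 1 := by omega
    have e2 : (⇑derivative)^[n - j] ((X ^ 2 - 1 : Polynomial ℝ) ^ n)
        = derivative ((⇑derivative)^[n - (j+1)] ((X ^ 2 - 1) ^ n)) := by
      rw [e1, Function.iterate_succ_apply']
    rw [e2, Pint_parts]
    have b1 := rodrigues_boundary n (n - (j+1)) (by omega) 1 (by norm_num)
    have b2 := rodrigues_boundary n (n - (j+1)) (by omega) (-1) (by norm_num)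
    rw [eval_mul, eval_mul, b1, b2, Function.iterate_succ_apply']
    ring

lemma Pint_legendre_mul (n : ℕ) (q : Polynomial ℝ) :
    Pint (legendre n * q)
      = ((1:ℝ) / (2 ^ n * n.factorial)) * ((-1) ^ n *
          Pint ((X ^ 2 - 1) ^ n * (⇑derivative)^[n] q)) := by
  unfold legendre
  rw [smul_mul_assoc, Pint_smul]
  congr 1
  have := rodrigues_shift n q n le_rfl
  simpa using this

/-- Orthogonality: the integral of `legendre n` against lower-degree polynomials vanishes. -/
lemma legendre_orth (n : ℕ) (q : Polynomial ℝ) (hq : q.degree < n) :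
    Pint (legendre n * q) = 0 := by
  rw [Pint_legendre_mul]
  have : (⇑derivative)^[n] q = 0 := by
    rcases eq_or_ne q 0 with rfl | h
    · simp
    · exact iterate_derivative_eq_zero ((natDegree_lt_iff_degree_lt h).mpr hq)
  rw [this, mul_zero, Pint_zero, mul_zero, mul_zero]

lemma Pint_one_sub_sq (n : ℕ) :
    Pint ((1 - X ^ 2 : Polynomial ℝ) ^ n)
      = 2 ^ (2 * n + 1) * (n.factorial : ℝ) ^ 2 / ((2 * n + 1).factorial : ℝ) := by
  induction n with
  | zero =>
    unfold Pint
    norm_num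
  | succ n ih =>
    have hd : derivative ((1 - X ^ 2 : Polynomial ℝ) ^ (n+1))
        = (-(2 * ((n:ℝ) + 1))) • ((1 - X ^ 2) ^ n * X) := by
      have h2 : (1 - X ^ 2 : Polynomial ℝ) = -(X ^ 2 - 1) := by ring
      have h3 : derivative (1 - X ^ 2 : Polynomial ℝ) = -(C 2 * X) := by
        rw [h2, derivative_neg, deriv_sq_sub_one]
      rw [derivative_pow, h3, smul_eq_C_mul, Nat.add_sub_cancel]
      push_cast
      simp only [map_neg, map_mul, map_add, map_one]
      ring
    have hb : ∀ x : ℝ, x ^ 2 = 1 → ((1 - X ^ 2 : Polynomial ℝ) ^ (n+1)).eval x = 0 := by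
      intro x hx
      rw [eval_pow, eval_sub, eval_one, eval_pow, eval_X, hx, sub_self, zero_pow (by omega)]
    have hparts := Pint_parts ((1 - X ^ 2 : Polynomial ℝ) ^ (n+1)) X
    rw [hd, derivative_X, mul_one, smul_mul_assoc, Pint_smul] at hparts
    rw [eval_mul, eval_mul, hb 1 (by norm_num), hb (-1) (by norm_num), zero_mul, zero_mul] at hparts
    have hsplit : ((1 - X ^ 2 : Polynomial ℝ) ^ (n+1))
        = (1 - X ^ 2) ^ n - (1 - X ^ 2) ^ n * X * X := by ring
    have hJ : Pint ((1 - X ^ 2 : Polynomial ℝ) ^ (n+1))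
        = Pint ((1 - X ^ 2) ^ n) - Pint ((1 - X ^ 2) ^ n * X * X) := by
      rw [hsplit, Pint_sub]
    have hmm : ((1 - X ^ 2 : Polynomial ℝ) ^ n * X * X) = ((1 - X ^ 2) ^ n * (X * X)) := by ring
    rw [hmm] at hJ
    rw [hmm] at hparts
    set A := Pint ((1 - X ^ 2 : Polynomial ℝ) ^ n * (X * X)) with hA
    set J := Pint ((1 - X ^ 2 : Polynomial ℝ) ^ (n+1)) with hJdef
    have h1 : -(2 * ((n:ℝ) + 1)) * A = -J := by linarith
    have h2 : J = Pint ((1 - X ^ 2 : Polynomial ℝ) ^ n) - A := hJ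
    rw [ih] at h2
    have hrec : J * (2 * (n:ℝ) + 3) = (2 * (n:ℝ) + 2) *
        (2 ^ (2 * n + 1) * (n.factorial : ℝ) ^ 2 / ((2 * n + 1).factorial : ℝ)) := by
      have hn : (0:ℝ) < 2 * ((n:ℝ) + 1) := by positivity
      have hAJ : A = J / (2 * ((n:ℝ) + 1)) := by
        field_simp
        linarith
      rw [hAJ] at h2
      field_simp at h2 ⊢
      linarith
    have hfac1 : ((2 * (n+1) + 1).factorial : ℝ)
        = (2 * (n:ℝ) + 3) * (2 * (n:ℝ) + 2) * ((2 * n + 1).factorial : ℝ) := by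
      have h5 : 2 * (n+1) + 1 = (2 * n + 1) + 1 + 1 := by omega
      rw [h5, Nat.factorial_succ, Nat.factorial_succ]
      push_cast
      ring
    have hfac2 : ((n+1).factorial : ℝ) = ((n:ℝ) + 1) * (n.factorial : ℝ) := by
      rw [Nat.factorial_succ]; push_cast; ring
    have hne1 : ((2 * n + 1).factorial : ℝ) ≠ 0 := by positivity
    have hne3 : (2 * (n:ℝ) + 3) ≠ 0 := by positivity
    rw [hfac1, hfac2, eq_div_iff (by positivity)]
    have hJval : J = (2 * (n:ℝ) + 2) *
        (2 ^ (2 * n + 1) * (n.factorial : ℝ) ^ 2 / ((2 * n + 1).factorial : ℝ)) / (2 * (n:ℝ) + 3) := by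
      rw [eq_div_iff hne3]; linarith
    rw [hJval]
    field_simp
    ring

lemma monic_sq_sub_one : (X ^ 2 - 1 : Polynomial ℝ).Monic := by
  have := monic_X_pow_sub_C (1:ℝ) (two_ne_zero)
  simpa using this

lemma natDegree_sq_sub_one_pow (n : ℕ) : ((X ^ 2 - 1 : Polynomial ℝ) ^ n).natDegree = 2 * n := by
  rw [natDegree_pow]
  have : (X ^ 2 - 1 : Polynomial ℝ).natDegree = 2 := by
    have := natDegree_X_pow_sub_C (n := 2) (r := (1:ℝ))
    simpa using this
  rw [this]
  ring

lemma coeff_sq_sub_one_pow (n : ℕ) : ((X ^ 2 - 1 : Polynomial ℝ) ^ n).coeff (2 * n) = 1 := by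
  have h := (monic_sq_sub_one.pow n)
  have := h.coeff_natDegree
  rwa [natDegree_sq_sub_one_pow] at this

lemma legendre_natDegree_le (n : ℕ) : (legendre n).natDegree ≤ n := by
  unfold legendre
  refine (natDegree_smul_le _ _).trans ?_
  refine (natDegree_iterate_derivative _ _).trans ?_
  rw [natDegree_sq_sub_one_pow]
  omega

lemma legendre_coeff_self (n : ℕ) :
    (legendre n).coeff n = ((2 * n).descFactorial n : ℝ) / (2 ^ n * n.factorial) := by
  unfold legendre
  rw [coeff_smul, coeff_iterate_derivative]
  have : n + n = 2 * n := by ring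
  rw [this, coeff_sq_sub_one_pow]
  simp [smul_eq_mul]
  ring

lemma legendre_eval_neg_one (n : ℕ) : (legendre n).eval (-1) = (-1) ^ n := by
  obtain ⟨r, h1, h2⟩ := rodrigues_struct n n le_rfl
  unfold legendre
  rw [eval_smul, h1, Nat.sub_self, pow_zero, one_mul, smul_eq_mul, h2,
    Nat.descFactorial_self]
  have h2n : (2:ℝ) ^ n ≠ 0 := by positivity
  have hf : (n.factorial : ℝ) ≠ 0 := by positivity
  rw [neg_pow (2:ℝ)]
  field_simp

lemma Phi_eval_neg_one (k : ℕ) : (Phi k).eval (-1) = 0 := by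
  unfold Phi
  rw [eval_add, legendre_eval_neg_one, legendre_eval_neg_one, pow_succ]
  ring

lemma Pint_legendre_X_pow (n : ℕ) :
    Pint (legendre n * X ^ n)
      = 2 ^ (n+1) * (n.factorial : ℝ) ^ 2 / ((2 * n + 1).factorial : ℝ) := by
  rw [Pint_legendre_mul]
  rw [iterate_derivative_X_pow_eq_C_mul]
  have hsign : ((X ^ 2 - 1 : Polynomial ℝ) ^ n) = C ((-1:ℝ) ^ n) * (1 - X ^ 2) ^ n := by
    have : (X ^ 2 - 1 : Polynomial ℝ) = (-1) * (1 - X ^ 2) := by ring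
    rw [this, mul_pow]
    congr 1
    rw [← C_1, ← C_neg, ← C_pow]
  rw [Nat.sub_self, pow_zero, mul_one, Nat.descFactorial_self, hsign]
  have : C ((-1:ℝ) ^ n) * (1 - X ^ 2) ^ n * C ((n.factorial : ℝ))
      = ((-1:ℝ) ^ n * (n.factorial : ℝ)) • ((1 - X ^ 2) ^ n) := by
    rw [smul_eq_C_mul, C_mul]
    ring
  rw [this, Pint_smul, Pint_one_sub_sq]
  have h2n : (2:ℝ) ^ n ≠ 0 := by positivity
  have hf : (n.factorial : ℝ) ≠ 0 := by positivity
  have hf2 : ((2*n+1).factorial : ℝ) ≠ 0 := by positivity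
  have hpow : (2:ℝ) ^ (2 * n + 1) = 2 ^ n * 2 ^ (n + 1) := by
    rw [← pow_add]; congr 1; omega
  field_simp
  rw [hpow]
  have hneg : (-1:ℝ) ^ (n * 2) = 1 := by
    rw [mul_comm, pow_mul]; norm_num
  ring_nf
  rw [hneg]
  ring

lemma Pint_legendre_of_natDegree_le (n : ℕ) (q : Polynomial ℝ) (hq : q.natDegree ≤ n) :
    Pint (legendre n * q)
      = q.coeff n * (2 ^ (n+1) * (n.factorial : ℝ) ^ 2 / ((2 * n + 1).factorial : ℝ)) := by
  set r := q - C (q.coeff n) * X ^ n with hr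
  have hrdeg : r.degree < (n : ℕ) := by
    rw [degree_lt_iff_coeff_zero]
    intro m hm
    have hm' : n ≤ m := by exact_mod_cast hm
    rw [hr, coeff_sub, coeff_C_mul, coeff_X_pow]
    rcases eq_or_lt_of_le hm' with h | h
    · subst h; simp
    · rw [coeff_eq_zero_of_natDegree_lt (lt_of_le_of_lt hq h)]
      simp [Nat.ne_of_lt' h]
  have hsplit : legendre n * q
      = (q.coeff n) • (legendre n * X ^ n) + legendre n * r := by
    rw [smul_eq_C_mul, hr]
    ring
  rw [hsplit, Pint_add, Pint_smul, legendre_orth n r hrdeg, Pint_legendre_X_pow]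
  ring

lemma Phi_natDegree_le (k : ℕ) : (Phi k).natDegree ≤ k + 1 := by
  unfold Phi
  refine (natDegree_add_le _ _).trans ?_
  simp only [max_le_iff]
  exact ⟨legendre_natDegree_le (k+1), (legendre_natDegree_le k).trans (by omega)⟩

lemma Phi_coeff_top (k : ℕ) :
    (Phi k).coeff (k+1)
      = ((2 * (k+1)).descFactorial (k+1) : ℝ) / (2 ^ (k+1) * (k+1).factorial) := by
  unfold Phi
  rw [coeff_add, legendre_coeff_self,
    coeff_eq_zero_of_natDegree_lt (lt_of_le_of_lt (legendre_natDegree_le k) (by omega)),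
    add_zero]

lemma phi_orth_le (j k : ℕ) (hjk : j ≤ k) :
    Pint ((1 - X) * derivative (Phi j) * derivative (Phi k))
      = if j = k then 2 * ((k:ℝ) + 1) else 0 := by
  set w := (1 - X : Polynomial ℝ) * derivative (Phi j) with hw
  have hcomm : (1 - X : Polynomial ℝ) * derivative (Phi j) * derivative (Phi k)
      = derivative (Phi k) * w := by rw [hw]; ring
  have hparts := Pint_parts (Phi k) w
  rw [hcomm, hparts]
  have he1 : (Phi k * w).eval 1 = 0 := by
    rw [eval_mul, hw, eval_mul]
    norm_num
  have he2 : (Phi k * w).eval (-1) = 0 := by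
    rw [eval_mul, Phi_eval_neg_one, zero_mul]
  set g := derivative w with hg
  -- degree bound on g
  have hwdeg : w.natDegree ≤ j + 1 := by
    rw [hw]
    refine (natDegree_mul_le).trans ?_
    have h1 : (1 - X : Polynomial ℝ).natDegree ≤ 1 := by
      refine (natDegree_sub_le _ _).trans ?_
      simp
    have h2 : (derivative (Phi j)).natDegree ≤ j := by
      refine (natDegree_derivative_le _).trans ?_
      exact Nat.sub_le_sub_right (Phi_natDegree_le j) 1
    omega
  have hgdeg : g.natDegree ≤ j := by
    rw [hg]
    refine (natDegree_derivative_le _).trans ?_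
    omega
  have hgdeg' : g.degree < ((k+1 : ℕ) : WithBot ℕ) := by
    refine lt_of_le_of_lt (degree_le_natDegree) ?_
    exact_mod_cast lt_of_le_of_lt (Nat.cast_le.mpr (hgdeg.trans hjk)) (by exact_mod_cast Nat.lt_succ_self k)
  have hPhig : Phi k * g = legendre (k+1) * g + legendre k * g := by
    unfold Phi; ring
  rw [he1, he2, hPhig, Pint_add, legendre_orth (k+1) g hgdeg']
  rcases lt_or_eq_of_le hjk with h | h
  · have hgdeg'' : g.degree < ((k : ℕ) : WithBot ℕ) := by
      refine lt_of_le_of_lt (degree_le_natDegree) ?_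
      exact_mod_cast lt_of_le_of_lt (Nat.cast_le.mpr hgdeg) (by exact_mod_cast h)
    rw [legendre_orth k g hgdeg'', if_neg (by omega)]
    ring
  · subst h
    rw [if_pos rfl]
    rw [Pint_legendre_of_natDegree_le j g hgdeg]
    -- compute g.coeff j
    have hP1 : (derivative (Phi j)).coeff (j+1) = 0 := by
      rw [coeff_derivative, coeff_eq_zero_of_natDegree_lt (lt_of_le_of_lt (Phi_natDegree_le j) (by omega)),
        zero_mul]
    have hP0 : (derivative (Phi j)).coeff j = (Phi j).coeff (j+1) * ((j:ℝ) + 1) := by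
      rw [coeff_derivative]
    have hwc : w.coeff (j+1) = - ((Phi j).coeff (j+1) * ((j:ℝ) + 1)) := by
      have : w = derivative (Phi j) - X * derivative (Phi j) := by rw [hw]; ring
      rw [this, coeff_sub, coeff_X_mul, hP1, hP0]
      ring
    have hgc : g.coeff j = - ((Phi j).coeff (j+1) * ((j:ℝ) + 1) * ((j:ℝ) + 1)) := by
      rw [hg, coeff_derivative, hwc]
      ring
    rw [hgc, Phi_coeff_top]
    -- final arithmetic
    have hdesc : ((j+1).factorial) * ((2 * (j+1)).descFactorial (j+1)) = (2 * (j+1)).factorial := by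
      have h1 : (2 * (j+1)) - (j+1) = j + 1 := by omega
      have := Nat.factorial_mul_descFactorial (n := 2 * (j+1)) (k := j+1) (by omega)
      rwa [h1] at this
    have hfac : ((2 * (j + 1)).factorial : ℝ) = (2 * (j:ℝ) + 2) * ((2 * j + 1).factorial : ℝ) := by
      have : 2 * (j+1) = (2 * j + 1) + 1 := by omega
      rw [this, Nat.factorial_succ]
      push_cast
      ring
    have hdescR : ((2 * (j+1)).descFactorial (j+1) : ℝ)
        = (2 * (j:ℝ) + 2) * ((2 * j + 1).factorial : ℝ) / ((j+1).factorial : ℝ) := by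
      have hR : ((j+1).factorial : ℝ) * ((2*(j+1)).descFactorial (j+1) : ℝ)
          = ((2*(j+1)).factorial : ℝ) := by exact_mod_cast hdesc
      rw [eq_div_iff (by positivity : ((j+1).factorial:ℝ) ≠ 0), ← hfac, ← hR]
      ring
    rw [hdescR]
    have e1 : ((j+1).factorial : ℝ) = ((j:ℝ)+1) * (j.factorial : ℝ) := by
      rw [Nat.factorial_succ]; push_cast; ring
    have n1 : ((j.factorial : ℝ)) ≠ 0 := by positivity
    have n2 : ((2*j+1).factorial : ℝ) ≠ 0 := by positivity
    have n3 : (2:ℝ) ^ (j+1) ≠ 0 := by positivity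
    have n4 : ((j:ℝ) + 1) ≠ 0 := by positivity
    rw [e1]
    field_simp
    ring

lemma phi_orth (j k : ℕ) :
    Pint ((1 - X) * derivative (Phi j) * derivative (Phi k))
      = if j = k then 2 * ((k:ℝ) + 1) else 0 := by
  rcases le_total j k with h | h
  · exact phi_orth_le j k h
  · have h2 := phi_orth_le k j h
    have hc : (1 - X : Polynomial ℝ) * derivative (Phi j) * derivative (Phi k)
        = (1 - X) * derivative (Phi k) * derivative (Phi j) := by ring
    rw [hc, h2]
    by_cases hjk : j = k
    · subst hjk; simp
    · rw [if_neg (fun hh => hjk hh.symm), if_neg hjk]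

lemma Pint_sum {ι : Type*} (s : Finset ι) (f : ι → Polynomial ℝ) :
    Pint (∑ i ∈ s, f i) = ∑ i ∈ s, Pint (f i) := by
  induction s using Finset.cons_induction with
  | empty => simp [Pint_zero]
  | cons a s ha ih => rw [Finset.sum_cons, Pint_add, ih, Finset.sum_cons]


theorem weighted_norm_phi_deriv_expansion (K : ℕ) (a : ℕ → ℝ) :
    ∫ x in (-1 : ℝ)..1,
        (∑ k ∈ Finset.range (K + 1), a k * (derivative (Phi k)).eval x) ^ 2 * (1 - x)
      = 2 * ∑ k ∈ Finset.range (K + 1), ((k : ℝ) + 1) * (a k) ^ 2 := by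
  have hQ : ∀ x : ℝ,
      (∑ k ∈ Finset.range (K + 1), a k * (derivative (Phi k)).eval x) ^ 2 * (1 - x)
      = ((∑ k ∈ Finset.range (K + 1), C (a k) * derivative (Phi k)) ^ 2 * (1 - X)).eval x := by
    intro x
    rw [eval_mul, eval_pow, eval_finset_sum]
    simp [eval_mul, eval_C]
  simp_rw [hQ]
  show Pint _ = _
  have hexp : (∑ k ∈ Finset.range (K + 1), C (a k) * derivative (Phi k)) ^ 2 * (1 - X)
      = ∑ j ∈ Finset.range (K + 1), ∑ k ∈ Finset.range (K + 1),
          (a j * a k) • ((1 - X) * derivative (Phi j) * derivative (Phi k)) := by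
    rw [sq, Finset.sum_mul_sum, Finset.sum_mul]
    refine Finset.sum_congr rfl fun j _ => ?_
    rw [Finset.sum_mul]
    refine Finset.sum_congr rfl fun k _ => ?_
    rw [smul_eq_C_mul, C_mul]
    ring
  rw [hexp, Pint_sum]
  have : ∀ j ∈ Finset.range (K + 1),
      Pint (∑ k ∈ Finset.range (K + 1),
        (a j * a k) • ((1 - X) * derivative (Phi j) * derivative (Phi k)))
      = a j ^ 2 * (2 * ((j:ℝ) + 1)) := by
    intro j hj
    rw [Pint_sum]
    have : ∀ k ∈ Finset.range (K + 1),
        Pint ((a j * a k) • ((1 - X) * derivative (Phi j) * derivative (Phi k)))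
        = if j = k then a j ^ 2 * (2 * ((j:ℝ) + 1)) else 0 := by
      intro k _
      rw [Pint_smul, phi_orth]
      by_cases h : j = k
      · subst h; rw [if_pos rfl, if_pos rfl]; ring
      · rw [if_neg h, if_neg h, mul_zero]
    rw [Finset.sum_congr rfl this, Finset.sum_ite_eq (Finset.range (K+1)) j
      (fun _ => a j ^ 2 * (2 * ((j:ℝ) + 1)))]
    rw [if_pos hj]
  rw [Finset.sum_congr rfl this, Finset.mul_sum]
  exact Finset.sum_congr rfl fun j _ => by ring
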